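/- Let Y be an I×J×K real tensor with Tucker decomposition Y = G ×₁ U ×₂ V ×₃ W, where G ∈ ℝ^{R₁×R₂×R₃} and U, V, W have full column ranks R₁, R₂, R₃. Let P₁ ∈ ℝ^{I_H×I}, P₂ ∈ ℝ^{J_H×J}, P_M ∈ ℝ^{K_M×K}. Define Y_M = Y ×₃ P_M and Y_H = Y ×₁ P₁ ×₂ P₂. Suppose rank of the first unfolding of Y_M is R₁, of the second unfolding of Y_M is R₂, of the third unfolding of Y_H is R₃, and additionally either (a) rank(P₁U) = R₁ and rank(P₂V) = R₂, or (b) rank(P_M W) = R₃. Then Y is the unique tensor of multilinear rank at most (R₁,R₂,R₃) satisfying Ŷ ×₃ P_M = Y_M and Ŷ ×₁ P₁ ×₂ P₂ = Y_H. -/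

import Mathlib

open Matrix
open scoped Kronecker

/-- Mode-1 contraction of a third-order tensor with a matrix. -/
def contract1 {I I' J K : ℕ} (P : Matrix (Fin I') (Fin I) ℝ)
    (Y : Fin I → Fin J → Fin K → ℝ) : Fin I' → Fin J → Fin K → ℝ :=
  fun i j k => ∑ l, P i l * Y l j k

/-- Mode-2 contraction of a third-order tensor with a matrix. -/
def contract2 {I J J' K : ℕ} (P : Matrix (Fin J') (Fin J) ℝ)
    (Y : Fin I → Fin J → Fin K → ℝ) : Fin I → Fin J' → Fin K → ℝ :=
  fun i j k => ∑ l, P j l * Y i l k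

/-- Mode-3 contraction of a third-order tensor with a matrix. -/
def contract3 {I J K K' : ℕ} (P : Matrix (Fin K') (Fin K) ℝ)
    (Y : Fin I → Fin J → Fin K → ℝ) : Fin I → Fin J → Fin K' → ℝ :=
  fun i j k => ∑ l, P k l * Y i j l

/-- Tucker (multilinear) product of a core tensor with three factor matrices. -/
def tucker {I J K R₁ R₂ R₃ : ℕ} (G : Fin R₁ → Fin R₂ → Fin R₃ → ℝ)
    (U : Matrix (Fin I) (Fin R₁) ℝ) (V : Matrix (Fin J) (Fin R₂) ℝ)
    (W : Matrix (Fin K) (Fin R₃) ℝ) : Fin I → Fin J → Fin K → ℝ :=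
  fun i j k => ∑ p, ∑ q, ∑ r, G p q r * U i p * V j q * W k r

/-- First (mode-1) unfolding, column-major: row index (k,j) with j fastest. -/
def unfold1 {I J K : ℕ} (Y : Fin I → Fin J → Fin K → ℝ) :
    Matrix (Fin K × Fin J) (Fin I) ℝ := fun p i => Y i p.2 p.1

/-- Second (mode-2) unfolding. -/
def unfold2 {I J K : ℕ} (Y : Fin I → Fin J → Fin K → ℝ) :
    Matrix (Fin K × Fin I) (Fin J) ℝ := fun p j => Y p.2 j p.1

/-- Third (mode-3) unfolding. -/
def unfold3 {I J K : ℕ} (Y : Fin I → Fin J → Fin K → ℝ) :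
    Matrix (Fin J × Fin I) (Fin K) ℝ := fun p k => Y p.2 p.1 k

/-- The tensor has multilinear rank at most (R₁,R₂,R₃). -/
def mlrankLE {I J K : ℕ} (Y : Fin I → Fin J → Fin K → ℝ) (R₁ R₂ R₃ : ℕ) : Prop :=
  ∃ (G : Fin R₁ → Fin R₂ → Fin R₃ → ℝ) (U : Matrix (Fin I) (Fin R₁) ℝ)
    (V : Matrix (Fin J) (Fin R₂) ℝ) (W : Matrix (Fin K) (Fin R₃) ℝ),
    Y = tucker G U V W

/-- Frobenius norm of a third-order tensor. -/
noncomputable def frob {I J K : ℕ} (Y : Fin I → Fin J → Fin K → ℝ) : ℝ :=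
  Real.sqrt (∑ i, ∑ j, ∑ k, (Y i j k) ^ 2)

/-- `X` is the Moore–Penrose pseudoinverse of `A` (the four Penrose conditions). -/
def IsMPInv {m n : Type*} [Fintype m] [Fintype n] (A : Matrix m n ℝ)
    (X : Matrix n m ℝ) : Prop :=
  A * X * A = A ∧ X * A * X = X ∧ (A * X)ᵀ = A * X ∧ (X * A)ᵀ = X * A

/-- Polyadic (CP) combination of factor matrices. -/
def cp {I J K F : ℕ} (A : Matrix (Fin I) (Fin F) ℝ) (B : Matrix (Fin J) (Fin F) ℝ)
    (C : Matrix (Fin K) (Fin F) ℝ) : Fin I → Fin J → Fin K → ℝ :=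
  fun i j k => ∑ r, A i r * B j r * C k r

/-- Khatri–Rao (columnwise Kronecker) product. -/
def khatriRao {n m F : ℕ} (N : Matrix (Fin n) (Fin F) ℝ) (M : Matrix (Fin m) (Fin F) ℝ) :
    Matrix (Fin n × Fin m) (Fin F) ℝ := fun p r => N p.1 r * M p.2 r


lemma my_exists_left_inv {m n : ℕ} (A : Matrix (Fin m) (Fin n) ℝ) (h : A.rank = n) :
    ∃ L : Matrix (Fin n) (Fin m) ℝ, L * A = 1 := by
  have h2 : (Aᵀ * A).rank = n := by rw [Matrix.rank_transpose_mul_self, h]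
  have htop : LinearMap.range (Aᵀ * A).mulVecLin = ⊤ := by
    apply Submodule.eq_top_of_finrank_eq
    have : Module.finrank ℝ (Fin n → ℝ) = n := by simp
    rw [this]; exact h2
  have hsurj : Function.Surjective (Aᵀ * A).mulVecLin := LinearMap.range_eq_top.mp htop
  have hinj : Function.Injective (Aᵀ * A).mulVecLin :=
    (LinearMap.injective_iff_surjective).mpr hsurj
  have hdet : IsUnit (Aᵀ * A).det := by
    rw [isUnit_iff_ne_zero]
    intro hd
    obtain ⟨v, hv, hmul⟩ := (Matrix.exists_mulVec_eq_zero_iff).mpr hd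
    apply hv
    have : (Aᵀ * A).mulVecLin v = (Aᵀ * A).mulVecLin 0 := by
      rw [Matrix.mulVecLin_apply, Matrix.mulVecLin_apply, hmul, Matrix.mulVec_zero]
    exact hinj this
  exact ⟨(Aᵀ * A)⁻¹ * Aᵀ, by rw [Matrix.mul_assoc, Matrix.nonsing_inv_mul _ hdet]⟩

lemma my_exists_factor {n R : ℕ} (W W' : Matrix (Fin n) (Fin R) ℝ)
    (h : LinearMap.range W'.mulVecLin ≤ LinearMap.range W.mulVecLin) :
    ∃ M : Matrix (Fin R) (Fin R) ℝ, W' = W * M := by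
  have key : ∀ r : Fin R, ∃ x, W *ᵥ x = fun k => W' k r := by
    intro r
    have hm : (fun k => W' k r) ∈ LinearMap.range W.mulVecLin := by
      apply h
      exact ⟨Pi.single r 1, by simp [Matrix.mulVecLin_apply, Matrix.mulVec_single]; rfl⟩
    exact hm
  choose x hx using key
  refine ⟨Matrix.of fun s r => x r s, ?_⟩
  ext k r
  have := congrFun (hx r) k
  simpa [Matrix.mul_apply, Matrix.mulVec, dotProduct] using this.symm

lemma my_rank_factor {n R : ℕ} {m : Type*} [Fintype m] (W W' : Matrix (Fin n) (Fin R) ℝ)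
    (A A' : Matrix (Fin R) m ℝ) (heq : W * A = W' * A')
    (hrank : (W * A).rank = R) : ∃ M : Matrix (Fin R) (Fin R) ℝ, W' = W * M := by
  have h1 : LinearMap.range (W * A).mulVecLin ≤ LinearMap.range W.mulVecLin := by
    rw [Matrix.mulVecLin_mul]; exact LinearMap.range_comp_le_range _ _
  have h1' : LinearMap.range (W * A).mulVecLin = LinearMap.range W.mulVecLin := by
    apply Submodule.eq_of_le_of_finrank_le h1
    show W.rank ≤ (W * A).rank
    rw [hrank]; exact W.rank_le_width
  have h2 : LinearMap.range (W' * A').mulVecLin ≤ LinearMap.range W'.mulVecLin := by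
    rw [Matrix.mulVecLin_mul]; exact LinearMap.range_comp_le_range _ _
  have h3 : LinearMap.range W.mulVecLin ≤ LinearMap.range W'.mulVecLin := by
    rw [← h1', heq]; exact h2
  have h4 : LinearMap.range W.mulVecLin = LinearMap.range W'.mulVecLin := by
    apply Submodule.eq_of_le_of_finrank_le h3
    show W'.rank ≤ Module.finrank ℝ (LinearMap.range W.mulVecLin)
    have : Module.finrank ℝ (LinearMap.range W.mulVecLin) = R := by
      rw [← h1']; exact hrank
    rw [this]; exact W'.rank_le_width
  exact my_exists_factor W W' h4.ge

variable {I J K I' J' K' R₁ R₂ R₃ : ℕ} {G : Fin R₁ → Fin R₂ → Fin R₃ → ℝ}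
  {U : Matrix (Fin I) (Fin R₁) ℝ} {V : Matrix (Fin J) (Fin R₂) ℝ}
  {W : Matrix (Fin K) (Fin R₃) ℝ}

lemma contract1_tucker (P : Matrix (Fin I') (Fin I) ℝ) :
    contract1 P (tucker G U V W) = tucker G (P * U) V W := by
  funext i j k
  simp only [contract1, tucker, Matrix.mul_apply, Finset.mul_sum, Finset.sum_mul]
  rw [Finset.sum_comm]
  refine Finset.sum_congr rfl fun p _ => ?_
  rw [Finset.sum_comm]
  refine Finset.sum_congr rfl fun q _ => ?_
  rw [Finset.sum_comm]
  refine Finset.sum_congr rfl fun r _ => Finset.sum_congr rfl fun l _ => by ring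

lemma contract2_tucker (P : Matrix (Fin J') (Fin J) ℝ) :
    contract2 P (tucker G U V W) = tucker G U (P * V) W := by
  funext i j k
  simp only [contract2, tucker, Matrix.mul_apply, Finset.mul_sum, Finset.sum_mul]
  rw [Finset.sum_comm]
  refine Finset.sum_congr rfl fun p _ => ?_
  rw [Finset.sum_comm]
  refine Finset.sum_congr rfl fun q _ => ?_
  rw [Finset.sum_comm]
  refine Finset.sum_congr rfl fun r _ => Finset.sum_congr rfl fun l _ => by ring

lemma contract3_tucker (P : Matrix (Fin K') (Fin K) ℝ) :
    contract3 P (tucker G U V W) = tucker G U V (P * W) := by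
  funext i j k
  simp only [contract3, tucker, Matrix.mul_apply, Finset.mul_sum, Finset.sum_mul]
  rw [Finset.sum_comm]
  refine Finset.sum_congr rfl fun p _ => ?_
  rw [Finset.sum_comm]
  refine Finset.sum_congr rfl fun q _ => ?_
  rw [Finset.sum_comm]
  refine Finset.sum_congr rfl fun r _ => Finset.sum_congr rfl fun l _ => by ring

def aux1 (G : Fin R₁ → Fin R₂ → Fin R₃ → ℝ) (V : Matrix (Fin J) (Fin R₂) ℝ)
    (W : Matrix (Fin K) (Fin R₃) ℝ) : Matrix (Fin R₁) (Fin K × Fin J) ℝ :=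
  fun p x => ∑ q, ∑ r, G p q r * V x.2 q * W x.1 r

def aux2 (G : Fin R₁ → Fin R₂ → Fin R₃ → ℝ) (U : Matrix (Fin I) (Fin R₁) ℝ)
    (W : Matrix (Fin K) (Fin R₃) ℝ) : Matrix (Fin R₂) (Fin K × Fin I) ℝ :=
  fun q x => ∑ p, ∑ r, G p q r * U x.2 p * W x.1 r

def aux3 (G : Fin R₁ → Fin R₂ → Fin R₃ → ℝ) (U : Matrix (Fin I) (Fin R₁) ℝ)
    (V : Matrix (Fin J) (Fin R₂) ℝ) : Matrix (Fin R₃) (Fin J × Fin I) ℝ :=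
  fun r x => ∑ p, ∑ q, G p q r * U x.2 p * V x.1 q

lemma unfold1_tucker : (unfold1 (tucker G U V W))ᵀ = U * aux1 G V W := by
  ext i x
  simp only [transpose_apply, unfold1, tucker, Matrix.mul_apply, aux1, Finset.mul_sum]
  exact Finset.sum_congr rfl fun p _ => Finset.sum_congr rfl fun q _ =>
    Finset.sum_congr rfl fun r _ => by ring

lemma unfold2_tucker : (unfold2 (tucker G U V W))ᵀ = V * aux2 G U W := by
  ext j x
  simp only [transpose_apply, unfold2, tucker, Matrix.mul_apply, aux2, Finset.mul_sum]
  rw [Finset.sum_comm]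
  exact Finset.sum_congr rfl fun q _ => Finset.sum_congr rfl fun p _ =>
    Finset.sum_congr rfl fun r _ => by ring

lemma unfold3_tucker : (unfold3 (tucker G U V W))ᵀ = W * aux3 G U V := by
  ext k x
  simp only [transpose_apply, unfold3, tucker, Matrix.mul_apply, aux3, Finset.mul_sum]
  rw [show (∑ p, ∑ q, ∑ r, G p q r * U x.2 p * V x.1 q * W k r)
      = ∑ p, ∑ r, ∑ q, G p q r * U x.2 p * V x.1 q * W k r from
    Finset.sum_congr rfl fun p _ => Finset.sum_comm .., Finset.sum_comm]
  exact Finset.sum_congr rfl fun r _ => Finset.sum_congr rfl fun p _ =>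
    Finset.sum_congr rfl fun q _ => by ring

/-- Deterministic exact recovery for the coupled Tucker model (Theorem 1, part 1). -/
theorem tucker_deterministic_recovery
    {I J K I_H J_H K_M R₁ R₂ R₃ : ℕ}
    (G : Fin R₁ → Fin R₂ → Fin R₃ → ℝ)
    (U : Matrix (Fin I) (Fin R₁) ℝ) (V : Matrix (Fin J) (Fin R₂) ℝ)
    (W : Matrix (Fin K) (Fin R₃) ℝ)
    (hU : U.rank = R₁) (hV : V.rank = R₂) (hW : W.rank = R₃)
    (P₁ : Matrix (Fin I_H) (Fin I) ℝ) (P₂ : Matrix (Fin J_H) (Fin J) ℝ)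
    (P_M : Matrix (Fin K_M) (Fin K) ℝ)
    (Y : Fin I → Fin J → Fin K → ℝ) (hY : Y = tucker G U V W)
    (hM1 : (unfold1 (contract3 P_M Y)).rank = R₁)
    (hM2 : (unfold2 (contract3 P_M Y)).rank = R₂)
    (hH3 : (unfold3 (contract1 P₁ (contract2 P₂ Y))).rank = R₃)
    (hab : ((P₁ * U).rank = R₁ ∧ (P₂ * V).rank = R₂) ∨ (P_M * W).rank = R₃) :
    ∀ Z : Fin I → Fin J → Fin K → ℝ, mlrankLE Z R₁ R₂ R₃ →
      contract3 P_M Z = contract3 P_M Y →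
      contract1 P₁ (contract2 P₂ Z) = contract1 P₁ (contract2 P₂ Y) →
      Z = Y := by
  rintro Z ⟨G', U', V', W', hZeq⟩ hc3 hcH
  have EM : tucker G' U' V' (P_M * W') = tucker G U V (P_M * W) := by
    rw [← contract3_tucker, ← contract3_tucker, ← hZeq, ← hY]; exact hc3
  have EH : tucker G' (P₁ * U') (P₂ * V') W' = tucker G (P₁ * U) (P₂ * V) W := by
    rw [← contract1_tucker, ← contract1_tucker, ← contract2_tucker, ← contract2_tucker,
      ← hZeq, ← hY]
    exact hcH
  rcases hab with ⟨ha1, ha2⟩ | hb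
  · -- Case (a)
    have hM1' : (U * aux1 G V (P_M * W)).rank = R₁ := by
      rw [← unfold1_tucker, Matrix.rank_transpose, ← contract3_tucker, ← hY]; exact hM1
    have hfac1 : U * aux1 G V (P_M * W) = U' * aux1 G' V' (P_M * W') := by
      rw [← unfold1_tucker, ← unfold1_tucker, EM]
    obtain ⟨M₁, hM₁⟩ := my_rank_factor U U' _ _ hfac1 hM1'
    have hM2' : (V * aux2 G U (P_M * W)).rank = R₂ := by
      rw [← unfold2_tucker, Matrix.rank_transpose, ← contract3_tucker, ← hY]; exact hM2
    have hfac2 : V * aux2 G U (P_M * W) = V' * aux2 G' U' (P_M * W') := by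
      rw [← unfold2_tucker, ← unfold2_tucker, EM]
    obtain ⟨M₂, hM₂⟩ := my_rank_factor V V' _ _ hfac2 hM2'
    obtain ⟨L₁, hL₁⟩ := my_exists_left_inv (P₁ * U) ha1
    obtain ⟨L₂, hL₂⟩ := my_exists_left_inv (P₂ * V) ha2
    have hU' : (U * L₁) * (P₁ * U') = U' := by
      rw [hM₁, ← Matrix.mul_assoc P₁ U M₁, ← Matrix.mul_assoc (U * L₁) (P₁ * U) M₁,
        Matrix.mul_assoc U L₁ (P₁ * U), hL₁, Matrix.mul_one]
    have hV' : (V * L₂) * (P₂ * V') = V' := by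
      rw [hM₂, ← Matrix.mul_assoc P₂ V M₂, ← Matrix.mul_assoc (V * L₂) (P₂ * V) M₂,
        Matrix.mul_assoc V L₂ (P₂ * V), hL₂, Matrix.mul_one]
    calc Z = tucker G' U' V' W' := hZeq
      _ = tucker G' ((U * L₁) * (P₁ * U')) ((V * L₂) * (P₂ * V')) W' := by rw [hU', hV']
      _ = contract1 (U * L₁) (contract2 (V * L₂) (tucker G' (P₁ * U') (P₂ * V') W')) := by
          rw [contract2_tucker, contract1_tucker]
      _ = contract1 (U * L₁) (contract2 (V * L₂) (tucker G (P₁ * U) (P₂ * V) W)) := by rw [EH]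
      _ = tucker G ((U * L₁) * (P₁ * U)) ((V * L₂) * (P₂ * V)) W := by
          rw [contract2_tucker, contract1_tucker]
      _ = tucker G U V W := by
          rw [Matrix.mul_assoc U L₁ (P₁ * U), hL₁, Matrix.mul_one,
            Matrix.mul_assoc V L₂ (P₂ * V), hL₂, Matrix.mul_one]
      _ = Y := hY.symm
  · -- Case (b)
    have hH3' : (W * aux3 G (P₁ * U) (P₂ * V)).rank = R₃ := by
      rw [← unfold3_tucker, Matrix.rank_transpose, ← contract1_tucker, ← contract2_tucker,
        ← hY]
      exact hH3
    have hfac3 : W * aux3 G (P₁ * U) (P₂ * V) = W' * aux3 G' (P₁ * U') (P₂ * V') := by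
      rw [← unfold3_tucker, ← unfold3_tucker, EH]
    obtain ⟨M₃, hM₃⟩ := my_rank_factor W W' _ _ hfac3 hH3'
    obtain ⟨L, hL⟩ := my_exists_left_inv (P_M * W) hb
    have hW' : (W * L) * (P_M * W') = W' := by
      rw [hM₃, ← Matrix.mul_assoc P_M W M₃, ← Matrix.mul_assoc (W * L) (P_M * W) M₃,
        Matrix.mul_assoc W L (P_M * W), hL, Matrix.mul_one]
    calc Z = tucker G' U' V' W' := hZeq
      _ = tucker G' U' V' ((W * L) * (P_M * W')) := by rw [hW']
      _ = contract3 (W * L) (tucker G' U' V' (P_M * W')) := by rw [contract3_tucker]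
      _ = contract3 (W * L) (tucker G U V (P_M * W)) := by rw [EM]
      _ = tucker G U V ((W * L) * (P_M * W)) := by rw [contract3_tucker]
      _ = tucker G U V W := by rw [Matrix.mul_assoc W L (P_M * W), hL, Matrix.mul_one]
      _ = Y := hY.symm
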